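/- If a ∈ H^∞ is an outer function (so that aH² is dense in H²), then the set ℂ + J(aH²) = { c + J(a·g) : c ∈ ℂ, g ∈ H² } is dense in H², where J is the antiderivative operator (Jh)(z) = ∫₀^z h(w) dw. -/

import Mathlib

open Metric ComplexConjugate

noncomputable abbrev H2 : Type := lp (fun _ : ℕ => ℂ) 2

noncomputable def hardyEval (h : H2) (z : ℂ) : ℂ := ∑' n : ℕ, h n * z ^ n

namespace JAux

/-- The coefficient sequence of the antiderivative. -/
noncomputable def Jfun (x : H2) : ℕ → ℂ := fun n => match n with
  | 0 => 0
  | Nat.succ m => x m / ((m : ℂ) + 1)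

lemma Jfun_zero (x : H2) : Jfun x 0 = 0 := rfl

lemma Jfun_succ (x : H2) (n : ℕ) : Jfun x (n + 1) = x n / ((n : ℂ) + 1) := rfl

lemma norm_Jfun_succ_le (x : H2) (n : ℕ) : ‖Jfun x (n + 1)‖ ≤ ‖x n‖ := by
  rw [Jfun_succ, norm_div]
  have h1 : (1 : ℝ) ≤ ‖((n : ℂ) + 1)‖ := by
    have h : ((n : ℂ) + 1) = ((n + 1 : ℕ) : ℂ) := by push_cast; ring
    rw [h, Complex.norm_natCast]
    exact_mod_cast Nat.one_le_iff_ne_zero.2 (Nat.succ_ne_zero n)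
  exact div_le_self (norm_nonneg _) h1

lemma two_toReal : (2 : ENNReal).toReal = 2 := by norm_num

lemma summable_x (x : H2) : Summable (fun n => ‖x n‖ ^ (2 : ℝ)) := by
  have := lp.memℓp x
  rw [memℓp_gen_iff (by rw [two_toReal]; norm_num)] at this
  simpa [two_toReal] using this

lemma summable_Jfun (x : H2) : Summable (fun n => ‖Jfun x n‖ ^ (2 : ℝ)) := by
  rw [← summable_nat_add_iff 1]
  refine Summable.of_nonneg_of_le (fun n => by positivity)
    (fun n => ?_) (summable_x x)
  exact Real.rpow_le_rpow (norm_nonneg _) (norm_Jfun_succ_le x n) (by norm_num)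

lemma Jmem (x : H2) : Memℓp (Jfun x) 2 := by
  apply memℓp_gen
  simpa [two_toReal] using summable_Jfun x

/-- The antiderivative operator on coefficients. -/
noncomputable def J (x : H2) : H2 := ⟨Jfun x, Jmem x⟩

lemma J_apply (x : H2) (n : ℕ) : (J x) n = Jfun x n := rfl

lemma norm_J_le (x : H2) : ‖J x‖ ≤ ‖x‖ := by
  have hp : 0 < (2 : ENNReal).toReal := by rw [two_toReal]; norm_num
  refine (Real.rpow_le_rpow_iff (lp.norm_nonneg' (J x)) (lp.norm_nonneg' x) hp).mp ?_
  rw [lp.norm_rpow_eq_tsum hp (J x), lp.norm_rpow_eq_tsum hp x]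
  simp only [two_toReal, J_apply]
  have hs : Summable (fun n => ‖Jfun x n‖ ^ (2 : ℝ)) := summable_Jfun x
  rw [Summable.tsum_eq_zero_add hs]
  simp only [Jfun_zero, norm_zero]
  rw [Real.zero_rpow (by norm_num), zero_add]
  refine Summable.tsum_le_tsum (fun n => ?_) ((summable_nat_add_iff (f := fun n => ‖Jfun x n‖ ^ (2:ℝ)) 1).mpr hs) (summable_x x)
  exact Real.rpow_le_rpow (norm_nonneg _) (norm_Jfun_succ_le x n) (by norm_num)

end JAux

/-- If `a ∈ H^∞` is outer (i.e. `aH²` is dense in `H²`), then `ℂ + J(aH²)` is dense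
in `H²`, where `J` is the antiderivative operator acting on Taylor coefficients by
`(Jh)₀ = 0`, `(Jh)_{n+1} = hₙ/(n+1)`. -/
theorem dense_C_plus_J_aH2 (a : ℂ → ℂ)
    (ha_an : AnalyticOnNhd ℂ a (ball (0 : ℂ) 1))
    (ha_bdd : ∃ M : ℝ, ∀ z ∈ ball (0 : ℂ) 1, ‖a z‖ ≤ M)
    (ha_outer : Dense {g : H2 | ∃ h : H2, ∀ z ∈ ball (0 : ℂ) 1,
      hardyEval g z = a z * hardyEval h z}) :
    Dense {g : H2 | ∃ c : ℂ, ∃ h : H2,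
      (∃ h' : H2, ∀ z ∈ ball (0 : ℂ) 1, hardyEval h z = a z * hardyEval h' z) ∧
      g 0 = c ∧ ∀ n : ℕ, g (n + 1) = h n / ((n : ℂ) + 1)} := by
  rw [Metric.dense_iff]
  intro f ε hε
  -- truncation
  have hsum : HasSum (fun i : ℕ => lp.single 2 i (f i)) f :=
    lp.hasSum_single (by norm_num) f
  have htend := hsum.tendsto_sum_nat
  rw [Metric.tendsto_atTop] at htend
  obtain ⟨N, hN⟩ := htend (ε / 2) (by linarith)
  set M := max N 1 with hM
  set fN : H2 := ∑ i ∈ Finset.range M, lp.single 2 i (f i) with hfN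
  have hfNf : dist fN f < ε / 2 := hN M (le_max_left _ _)
  have hfN_apply : ∀ j : ℕ, fN j = if j ∈ Finset.range M then f j else 0 := by
    intro j
    simp only [hfN, lp.coeFn_sum, Finset.sum_apply, lp.single_apply, Finset.sum_dite_eq, Finset.sum_pi_single]
  have hfN0 : fN 0 = f 0 := by
    rw [hfN_apply]; simp [Finset.mem_range]; omega
  -- the derivative of the truncation
  set h₀ : H2 := ∑ i ∈ Finset.range M, lp.single 2 i (((i : ℂ) + 1) * fN (i + 1)) with hh₀
  have hh₀_apply : ∀ n : ℕ, h₀ n = ((n : ℂ) + 1) * fN (n + 1) := by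
    intro n
    simp only [hh₀, lp.coeFn_sum, Finset.sum_apply, lp.single_apply, Finset.sum_dite_eq]
    by_cases hn : n ∈ Finset.range M
    · simp [hn]
    · have : fN (n + 1) = 0 := by
        rw [hfN_apply]
        simp only [Finset.mem_range] at hn ⊢
        rw [if_neg (by omega)]
      simp [hn, this]
  -- approximate h₀ by an element of aH²
  obtain ⟨h, hhS, hhd⟩ := ha_outer.exists_dist_lt h₀ (show (0:ℝ) < ε / 2 by linarith)
  obtain ⟨h', hh'⟩ := hhS
  -- the candidate
  set g : H2 := lp.single 2 0 (f 0) + JAux.J h with hg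
  have hg0 : g 0 = f 0 := by
    simp only [hg, lp.coeFn_add, Pi.add_apply, JAux.J_apply, JAux.Jfun_zero, add_zero]
    exact lp.single_apply_self (E := fun _ : ℕ => ℂ) 2 0 (f 0)
  have hgsucc : ∀ n : ℕ, g (n + 1) = h n / ((n : ℂ) + 1) := by
    intro n
    simp only [hg, lp.coeFn_add, Pi.add_apply, JAux.J_apply, JAux.Jfun_succ]
    rw [lp.single_apply_ne (E := fun _ : ℕ => ℂ) 2 0 (f 0) (Nat.succ_ne_zero n), zero_add]
  -- key identity
  have hkey : g - f = JAux.J (h - h₀) + (fN - f) := by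
    apply lp.ext
    funext n
    cases n with
    | zero =>
      simp only [lp.coeFn_sub, lp.coeFn_add, Pi.sub_apply, Pi.add_apply,
        JAux.J_apply, JAux.Jfun_zero, hg0, hfN0]
      ring
    | succ m =>
      have hne : ((m : ℂ) + 1) ≠ 0 := Nat.cast_add_one_ne_zero m
      simp only [lp.coeFn_sub, lp.coeFn_add, Pi.sub_apply, Pi.add_apply,
        JAux.J_apply, JAux.Jfun_succ, hgsucc m, hh₀_apply m]
      field_simp
      ring
  have hdist : dist g f < ε := by
    rw [dist_eq_norm, hkey]
    calc ‖JAux.J (h - h₀) + (fN - f)‖ ≤ ‖JAux.J (h - h₀)‖ + ‖fN - f‖ := norm_add_le _ _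
      _ ≤ ‖h - h₀‖ + ‖fN - f‖ := by
          have := JAux.norm_J_le (h - h₀); linarith
      _ < ε / 2 + ε / 2 := by
          have h1 : ‖h - h₀‖ < ε / 2 := by rwa [dist_comm, dist_eq_norm] at hhd
          have h2 : ‖fN - f‖ < ε / 2 := by rwa [dist_eq_norm] at hfNf
          linarith
      _ = ε := by ring
  exact ⟨g, mem_ball.2 hdist,
    ⟨f 0, h, ⟨h', hh'⟩, hg0, hgsucc⟩⟩
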